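/- Let m ≥ 1 and let x_0, ..., x_m, y_0, ..., y_m be 2m+2 pairwise distinct complex numbers. Form the (m+1)×(m+1) matrix A with A_{0,q} = 1 for all 0 ≤ q ≤ m, and A_{p,q} = (x_q − y_0)/(x_q − y_p) for 1 ≤ p ≤ m and 0 ≤ q ≤ m. Then det A ≠ 0. -/

import Mathlib

open Polynomial Finset

/-- STATEMENT 11 (Cauchy-type determinant nonvanishing, Appendix B.5): for `m ≥ 1` and
`2m+2` pairwise distinct complex numbers `x_0, ..., x_m, y_0, ..., y_m`, the
`(m+1)×(m+1)` matrix with first row all `1`'s and entries `(x_q − y_0)/(x_q − y_p)` in row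
`p ≥ 1`, column `q`, has nonzero determinant. -/
theorem cauchy_type_det_ne_zero (m : ℕ) (hm : 1 ≤ m) (x y : Fin (m + 1) → ℂ)
    (hx : Function.Injective x) (hy : Function.Injective y)
    (hxy : ∀ p q : Fin (m + 1), x p ≠ y q) :
    (Matrix.of fun p q : Fin (m + 1) =>
        if p = 0 then 1 else (x q - y 0) / (x q - y p)).det ≠ 0 := by
  classical
  rw [Ne, ← Matrix.exists_mulVec_eq_zero_iff]
  rintro ⟨v, hv, hmv⟩
  have hsub : ∀ p q : Fin (m + 1), x q - y p ≠ 0 := fun p q => sub_ne_zero.2 (hxy q p)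
  set c : Fin (m + 1) → ℂ := fun q => v q * (x q - y 0) with hc
  have key : ∀ p, ∑ q, c q / (x q - y p) = 0 := by
    intro p
    have hrow := congrFun hmv p
    simp only [Matrix.mulVec, dotProduct, Matrix.of_apply, Pi.zero_apply] at hrow
    by_cases hp : p = 0
    · subst hp
      have : ∀ q, c q / (x q - y 0) = v q := by
        intro q
        rw [hc, mul_div_assoc, div_self (hsub 0 q), mul_one]
      rw [Finset.sum_congr rfl fun q _ => this q]
      simpa using hrow
    · have : ∀ q, c q / (x q - y p) =
          (if p = 0 then 1 else (x q - y 0) / (x q - y p)) * v q := by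
        intro q
        rw [if_neg hp, hc]
        ring
      rw [Finset.sum_congr rfl fun q _ => this q]
      exact hrow
  set P : ℂ[X] := ∑ q, C (c q) * ∏ r ∈ Finset.univ.erase q, (C (x r) - X) with hP
  have hdeg : P.natDegree < Fintype.card (Fin (m + 1)) := by
    have : P.natDegree ≤ m := by
      refine Polynomial.natDegree_sum_le_of_forall_le _ _ (fun q _ => ?_)
      refine le_trans (Polynomial.natDegree_mul_le) ?_
      simp only [Polynomial.natDegree_C, zero_add]
      refine le_trans (Polynomial.natDegree_prod_le _ _) ?_
      have : ∀ r ∈ Finset.univ.erase q, (C (x r) - X).natDegree ≤ 1 := by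
        intro r _
        refine le_trans (Polynomial.natDegree_sub_le _ _) ?_
        simp
      have h1 : ∑ r ∈ Finset.univ.erase q, (C (x r) - X).natDegree
          ≤ ∑ _r ∈ Finset.univ.erase q, 1 := Finset.sum_le_sum this
      simpa [Finset.card_erase_of_mem] using h1
    simpa using Nat.lt_succ_of_le this
  have heval : ∀ p, P.eval (y p) = 0 := by
    intro p
    have : P.eval (y p) = (∑ q, c q / (x q - y p)) * ∏ r, (x r - y p) := by
      rw [hP, Finset.sum_mul]
      simp only [Polynomial.eval_finset_sum, Polynomial.eval_mul, Polynomial.eval_C,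
        Polynomial.eval_prod, Polynomial.eval_sub, Polynomial.eval_X]
      refine Finset.sum_congr rfl fun q _ => ?_
      rw [← Finset.prod_erase_mul _ _ (Finset.mem_univ q)]
      field_simp [hsub p q]
    rw [this, key p, zero_mul]
  have hP0 : P = 0 :=
    Polynomial.eq_zero_of_natDegree_lt_card_of_eval_eq_zero P hy heval hdeg
  have hc0 : ∀ q, c q = 0 := by
    intro q
    have : P.eval (x q) = c q * ∏ r ∈ Finset.univ.erase q, (x r - x q) := by
      rw [hP]
      simp only [Polynomial.eval_finset_sum, Polynomial.eval_mul, Polynomial.eval_C,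
        Polynomial.eval_prod, Polynomial.eval_sub, Polynomial.eval_X]
      rw [Finset.sum_eq_single q]
      · intro q' _ hq'
        have : q ∈ Finset.univ.erase q' := by simp [Ne.symm, hq']
        rw [Finset.prod_eq_zero this (by ring), mul_zero]
      · simp
    rw [hP0] at this
    simp only [Polynomial.eval_zero] at this
    have hprod : ∏ r ∈ Finset.univ.erase q, (x r - x q) ≠ 0 := by
      refine Finset.prod_ne_zero_iff.2 fun r hr => ?_
      exact sub_ne_zero.2 fun h => (Finset.mem_erase.1 hr).1 (hx h)
    exact (mul_eq_zero.1 this.symm).resolve_right hprod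
  apply hv
  funext q
  have := hc0 q
  rw [hc] at this
  simpa [hsub 0 q] using this
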